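/- Let R be a commutative Krasner hyperring with unit and I a hyperideal. Then the canonical map π̄ : Spec(R/I) → Spec(R) induced by the projection π : R → R/I is injective with image V(I), and Spec(R/I) is homeomorphic to V(I) with the subspace topology. -/

import Mathlib

universe u

/-- A commutative Krasner hyperring with unit: `(R,+)` is a canonical hypergroup
(multivalued addition), `(R,·)` is a commutative monoid, `·` distributes over `+`
and `0` is absorbing. -/
structure KHR (R : Type u) where
  hadd : R → R → Set R
  mul : R → R → R
  zero : R
  one : R
  neg : R → R
  hadd_comm : ∀ a b, hadd a b = hadd b a
  hadd_assoc : ∀ a b c, (⋃ x ∈ hadd a b, hadd x c) = ⋃ y ∈ hadd b c, hadd a y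
  zero_hadd : ∀ a, hadd zero a = {a}
  neg_mem : ∀ a, zero ∈ hadd a (neg a)
  neg_unique : ∀ a b, zero ∈ hadd a b → b = neg a
  reversible : ∀ a b c, c ∈ hadd a b → b ∈ hadd (neg a) c
  mul_assoc : ∀ a b c, mul (mul a b) c = mul a (mul b c)
  mul_comm : ∀ a b, mul a b = mul b a
  one_mul : ∀ a, mul one a = a
  zero_mul : ∀ a, mul zero a = zero
  distrib : ∀ a b c, (fun x => mul a x) '' hadd b c = hadd (mul a b) (mul a c)

namespace KHR

variable {R : Type u} {S : Type u} {T : Type u} {Q : Type u}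

/-- Sum of two subsets: `A + B = ⋃ {a + b : a ∈ A, b ∈ B}`. -/
def sumSet (H : KHR R) (A B : Set R) : Set R := ⋃ a ∈ A, ⋃ b ∈ B, H.hadd a b

/-- The coset `x + I`. -/
def coset (H : KHR R) (x : R) (I : Set R) : Set R := H.sumSet {x} I

/-- Hyperideal of a Krasner hyperring. -/
def IsHyperideal (H : KHR R) (I : Set R) : Prop :=
  H.zero ∈ I ∧ (∀ a ∈ I, ∀ b ∈ I, H.hadd a b ⊆ I) ∧ (∀ a ∈ I, H.neg a ∈ I) ∧
    ∀ r : R, ∀ a ∈ I, H.mul r a ∈ I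

/-- Prime hyperideal. -/
def IsPrime (H : KHR R) (P : Set R) : Prop :=
  H.IsHyperideal P ∧ P ≠ Set.univ ∧ ∀ a b : R, H.mul a b ∈ P → a ∈ P ∨ b ∈ P

/-- Maximal hyperideal. -/
def IsMaximal (H : KHR R) (M : Set R) : Prop :=
  H.IsHyperideal M ∧ M ≠ Set.univ ∧ ∀ J : Set R, H.IsHyperideal J → M ⊂ J → J = Set.univ

/-- The prime spectrum. -/
def Spectrum (H : KHR R) : Type u := {P : Set R // H.IsPrime P}

/-- The Zariski-closed set attached to a set of elements. -/
def V (H : KHR R) (s : Set R) : Set H.Spectrum := {P | s ⊆ P.1}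

/-- The basic Zariski-open set attached to an element. -/
def W (H : KHR R) (x : R) : Set H.Spectrum := {P | x ∉ P.1}

/-- The hyperideal generated by a set. -/
def genIdeal (H : KHR R) (s : Set R) : Set R := ⋂₀ {I | H.IsHyperideal I ∧ s ⊆ I}

/-- The product `IJ` of two hyperideals. -/
def mulIdeal (H : KHR R) (I J : Set R) : Set R :=
  H.genIdeal {x | ∃ a ∈ I, ∃ b ∈ J, x = H.mul a b}

/-- The Zariski topology on the prime spectrum. -/
def zariski (H : KHR R) : TopologicalSpace H.Spectrum :=
  TopologicalSpace.generateFrom {U | ∃ I : Set R, H.IsHyperideal I ∧ U = (H.V I)ᶜ}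

/-- Powers of an element. -/
def pow (H : KHR R) (x : R) : ℕ → R
  | 0 => H.one
  | n+1 => H.mul x (H.pow x n)

/-- The nilradical. -/
def nil (H : KHR R) : Set R := {x | ∃ n : ℕ, H.pow x (n+1) = H.zero}

/-- The radical of a hyperideal. -/
def radical (H : KHR R) (I : Set R) : Set R := {x | ∃ n : ℕ, H.pow x (n+1) ∈ I}

/-- Units. -/
def IsUnit (H : KHR R) (x : R) : Prop := ∃ y, H.mul x y = H.one

/-- Good homomorphism of Krasner hyperrings. -/
structure GoodHom (H : KHR R) (K : KHR S) where
  toFun : R → S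
  map_hadd : ∀ a b, toFun '' H.hadd a b = K.hadd (toFun a) (toFun b)
  map_mul : ∀ a b, toFun (H.mul a b) = K.mul (toFun a) (toFun b)
  map_zero : toFun H.zero = K.zero
  map_one : toFun H.one = K.one

theorem comap_prime (H : KHR R) (K : KHR S) (f : GoodHom H K) {P : Set S}
    (hP : K.IsPrime P) : H.IsPrime (f.toFun ⁻¹' P) := by
  obtain ⟨⟨h0, haddc, hneg, hmulc⟩, hne, hpr⟩ := hP
  refine ⟨⟨?_, ?_, ?_, ?_⟩, ?_, ?_⟩
  · show f.toFun H.zero ∈ P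
    rw [f.map_zero]; exact h0
  · intro a ha b hb c hc
    have : f.toFun c ∈ K.hadd (f.toFun a) (f.toFun b) := by
      rw [← f.map_hadd]; exact ⟨c, hc, rfl⟩
    exact haddc _ ha _ hb this
  · intro a ha
    have hz : K.zero ∈ K.hadd (f.toFun a) (f.toFun (H.neg a)) := by
      rw [← f.map_hadd, ← f.map_zero]
      exact ⟨H.zero, H.neg_mem a, rfl⟩
    have : f.toFun (H.neg a) = K.neg (f.toFun a) := K.neg_unique _ _ hz
    show f.toFun (H.neg a) ∈ P
    rw [this]; exact hneg _ ha
  · intro r a ha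
    show f.toFun (H.mul r a) ∈ P
    rw [f.map_mul]; exact hmulc _ _ ha
  · intro hU
    apply hne
    ext s
    simp only [Set.mem_univ, iff_true]
    have h1 : f.toFun H.one ∈ P := by
      have : H.one ∈ f.toFun ⁻¹' P := by rw [hU]; trivial
      exact this
    have : K.mul s (f.toFun H.one) ∈ P := hmulc s _ h1
    rwa [f.map_one, K.mul_comm, K.one_mul] at this
  · intro a b hab
    have : K.mul (f.toFun a) (f.toFun b) ∈ P := by rw [← f.map_mul]; exact hab
    exact hpr _ _ this

/-- The induced map on spectra. -/
def specMap (H : KHR R) (K : KHR S) (f : GoodHom H K) : K.Spectrum → H.Spectrum :=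
  fun P => ⟨f.toFun ⁻¹' P.1, comap_prime H K f P.2⟩

/-- `K` is the quotient hyperring of `H` by the hyperideal `I`, witnessed by the
canonical projection. -/
structure IsQuotient (H : KHR R) (K : KHR Q) (I : Set R) where
  hom : GoodHom H K
  surj : Function.Surjective hom.toFun
  fiber : ∀ x y, hom.toFun x = hom.toFun y ↔ H.coset x I = H.coset y I

/-- Strongly regular (equivalence) relation on a Krasner hyperring. -/
def StronglyRegular (H : KHR R) (ρ : R → R → Prop) : Prop :=
  Equivalence ρ ∧ ∀ a b c d, ρ a b → ρ c d →
    (∀ x ∈ H.hadd a c, ∀ y ∈ H.hadd b d, ρ x y) ∧ ρ (H.mul a c) (H.mul b d)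

/-- The fundamental relation `γ*`: the smallest strongly regular relation. -/
def gamma (H : KHR R) : R → R → Prop := fun x y => ∀ ρ, H.StronglyRegular ρ → ρ x y

/-- The zero class `γ*(0)` of the fundamental relation. -/
def gammaZero (H : KHR R) : Set R := {x | H.gamma x H.zero}



/-- The product of two Krasner hyperrings, with componentwise hyperoperations. -/
def prodKHR (H : KHR R) (K : KHR S) : KHR (R × S) where
  hadd a b := H.hadd a.1 b.1 ×ˢ K.hadd a.2 b.2
  mul a b := (H.mul a.1 b.1, K.mul a.2 b.2)
  zero := (H.zero, K.zero)
  one := (H.one, K.one)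
  neg a := (H.neg a.1, K.neg a.2)
  hadd_comm a b := by beta_reduce; rw [H.hadd_comm, K.hadd_comm]
  hadd_assoc a b c := by
    beta_reduce
    have h1 := H.hadd_assoc a.1 b.1 c.1
    have h2 := K.hadd_assoc a.2 b.2 c.2
    ext ⟨p, q⟩
    have e1 : p ∈ (⋃ x ∈ H.hadd a.1 b.1, H.hadd x c.1) ↔
        p ∈ ⋃ y ∈ H.hadd b.1 c.1, H.hadd a.1 y := by rw [h1]
    have e2 : q ∈ (⋃ x ∈ K.hadd a.2 b.2, K.hadd x c.2) ↔
        q ∈ ⋃ y ∈ K.hadd b.2 c.2, K.hadd a.2 y := by rw [h2]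
    simp only [Set.mem_iUnion, Set.mem_prod] at e1 e2 ⊢
    constructor
    · rintro ⟨⟨x1, x2⟩, ⟨⟨hx1, hx2⟩, hp, hq⟩⟩
      obtain ⟨y1, hy1, hp'⟩ := e1.1 ⟨x1, hx1, hp⟩
      obtain ⟨y2, hy2, hq'⟩ := e2.1 ⟨x2, hx2, hq⟩
      exact ⟨(y1, y2), ⟨hy1, hy2⟩, hp', hq'⟩
    · rintro ⟨⟨y1, y2⟩, ⟨⟨hy1, hy2⟩, hp, hq⟩⟩
      obtain ⟨x1, hx1, hp'⟩ := e1.2 ⟨y1, hy1, hp⟩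
      obtain ⟨x2, hx2, hq'⟩ := e2.2 ⟨y2, hy2, hq⟩
      exact ⟨(x1, x2), ⟨hx1, hx2⟩, hp', hq'⟩
  zero_hadd a := by
    beta_reduce
    rw [H.zero_hadd, K.zero_hadd, Set.singleton_prod_singleton]
  neg_mem a := ⟨H.neg_mem a.1, K.neg_mem a.2⟩
  neg_unique a b h := Prod.ext (H.neg_unique _ _ h.1) (K.neg_unique _ _ h.2)
  reversible a b c h := ⟨H.reversible _ _ _ h.1, K.reversible _ _ _ h.2⟩
  mul_assoc a b c := Prod.ext (H.mul_assoc _ _ _) (K.mul_assoc _ _ _)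
  mul_comm a b := Prod.ext (H.mul_comm _ _) (K.mul_comm _ _)
  one_mul a := Prod.ext (H.one_mul _) (K.one_mul _)
  zero_mul a := Prod.ext (H.zero_mul _) (K.zero_mul _)
  distrib a b c := by
    ext ⟨p, q⟩
    simp only [Set.mem_image, Set.mem_prod]
    constructor
    · rintro ⟨⟨x, y⟩, ⟨hx, hy⟩, h⟩
      obtain ⟨h1, h2⟩ := Prod.mk.injEq .. ▸ h
      constructor
      · rw [← H.distrib]; exact ⟨x, hx, h1⟩
      · rw [← K.distrib]; exact ⟨y, hy, h2⟩
    · rintro ⟨hp, hq⟩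
      rw [← H.distrib] at hp
      rw [← K.distrib] at hq
      obtain ⟨x, hx, hx'⟩ := hp
      obtain ⟨y, hy, hy'⟩ := hq
      exact ⟨(x, y), ⟨hx, hy⟩, by simp [hx', hy']⟩


end KHR


namespace KHR

variable {R Q : Type u}

theorem neg_neg' (H : KHR R) (a : R) : H.neg (H.neg a) = a :=
  (H.neg_unique (H.neg a) a (by rw [H.hadd_comm]; exact H.neg_mem a)).symm

theorem hadd_nonempty (H : KHR R) (a b : R) : (H.hadd a b).Nonempty := by
  have h := H.hadd_assoc (H.neg a) a b
  have hb : b ∈ ⋃ x ∈ H.hadd (H.neg a) a, H.hadd x b := by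
    apply Set.mem_biUnion (show H.zero ∈ H.hadd (H.neg a) a by
      rw [H.hadd_comm]; exact H.neg_mem a)
    rw [H.zero_hadd]; exact rfl
  rw [h] at hb
  obtain ⟨y, hy, _⟩ := Set.mem_iUnion₂.1 hb
  exact ⟨y, hy⟩

theorem mem_coset (H : KHR R) {x y : R} {I : Set R} :
    x ∈ H.coset y I ↔ ∃ i ∈ I, x ∈ H.hadd y i := by
  simp [coset, sumSet]

theorem self_mem_coset (H : KHR R) {I : Set R} (h0 : H.zero ∈ I) (x : R) :
    x ∈ H.coset x I :=
  H.mem_coset.2 ⟨H.zero, h0, by rw [H.hadd_comm, H.zero_hadd]; exact rfl⟩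

theorem coset_zero' (H : KHR R) {I : Set R} (_hI : H.IsHyperideal I) :
    H.coset H.zero I = I := by
  ext x
  rw [H.mem_coset]
  constructor
  · rintro ⟨i, hi, hx⟩
    rw [H.zero_hadd] at hx
    rwa [hx]
  · intro hx; exact ⟨x, hx, by rw [H.zero_hadd]; exact rfl⟩

theorem coset_of_mem (H : KHR R) {I : Set R} (hI : H.IsHyperideal I) {x : R}
    (hx : x ∈ I) : H.coset x I = I := by
  ext z
  rw [H.mem_coset]
  constructor
  · rintro ⟨i, hi, hz⟩; exact hI.2.1 x hx i hi hz
  · intro hz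
    obtain ⟨b, hb⟩ := H.hadd_nonempty (H.neg x) z
    refine ⟨b, hI.2.1 _ (hI.2.2.1 x hx) _ hz hb, ?_⟩
    have := H.reversible (H.neg x) z b hb
    rwa [H.neg_neg'] at this

variable {H : KHR R} {K : KHR Q} {I : Set R}

theorem GoodHom.map_neg (f : GoodHom H K) (a : R) :
    f.toFun (H.neg a) = K.neg (f.toFun a) := by
  apply K.neg_unique
  rw [← f.map_hadd, ← f.map_zero]
  exact ⟨H.zero, H.neg_mem a, rfl⟩

theorem pi_mem_hadd (q : IsQuotient H K I) (hI : H.IsHyperideal I) {x y : R}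
    (h : q.hom.toFun x = q.hom.toFun y) : ∃ i ∈ I, x ∈ H.hadd y i := by
  have heq := (q.fiber x y).1 h
  have hx := H.self_mem_coset hI.1 x
  rw [heq] at hx
  exact H.mem_coset.1 hx

theorem pi_zero_of_mem (q : IsQuotient H K I) (hI : H.IsHyperideal I) {x : R}
    (hx : x ∈ I) : q.hom.toFun x = K.zero := by
  rw [← q.hom.map_zero]
  exact (q.fiber x H.zero).2 (by rw [H.coset_of_mem hI hx, H.coset_zero' hI])

theorem preimage_image_eq (q : IsQuotient H K I) (hI : H.IsHyperideal I)
    {P : Set R} (hIP : I ⊆ P) (hP : H.IsHyperideal P) :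
    q.hom.toFun ⁻¹' (q.hom.toFun '' P) = P := by
  ext x
  constructor
  · rintro ⟨y, hy, hxy⟩
    obtain ⟨i, hi, hx⟩ := pi_mem_hadd q hI hxy.symm
    exact hP.2.1 y hy i (hIP hi) hx
  · exact fun h => Set.subset_preimage_image _ _ h

theorem image_subset_iff_preimage (q : IsQuotient H K I) (hI : H.IsHyperideal I)
    {P : Set R} (hIP : I ⊆ P) (hP : H.IsHyperideal P) (J : Set Q) :
    J ⊆ q.hom.toFun '' P ↔ q.hom.toFun ⁻¹' J ⊆ P := by
  constructor
  · intro h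
    rw [← preimage_image_eq q hI hIP hP]
    exact Set.preimage_mono h
  · intro h j hj
    obtain ⟨x, rfl⟩ := q.surj j
    exact ⟨x, h hj, rfl⟩

theorem comap_hyperideal' (f : GoodHom H K) {J : Set Q}
    (hJ : K.IsHyperideal J) : H.IsHyperideal (f.toFun ⁻¹' J) := by
  obtain ⟨h0, haddc, hneg, hmulc⟩ := hJ
  refine ⟨?_, ?_, ?_, ?_⟩
  · show f.toFun H.zero ∈ J; rw [f.map_zero]; exact h0
  · intro a ha b hb c hc
    have : f.toFun c ∈ K.hadd (f.toFun a) (f.toFun b) := by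
      rw [← f.map_hadd]; exact ⟨c, hc, rfl⟩
    exact haddc _ ha _ hb this
  · intro a ha
    show f.toFun (H.neg a) ∈ J
    rw [f.map_neg]; exact hneg _ ha
  · intro r a ha
    show f.toFun (H.mul r a) ∈ J
    rw [f.map_mul]; exact hmulc _ _ ha

theorem image_prime (q : IsQuotient H K I) (hI : H.IsHyperideal I)
    {P : Set R} (hIP : I ⊆ P) (hP : H.IsPrime P) :
    K.IsPrime (q.hom.toFun '' P) := by
  obtain ⟨⟨h0, haddc, hneg, hmulc⟩, hne, hpr⟩ := hP
  have hpre := preimage_image_eq q hI hIP ⟨h0, haddc, hneg, hmulc⟩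
  refine ⟨⟨?_, ?_, ?_, ?_⟩, ?_, ?_⟩
  · exact ⟨H.zero, h0, q.hom.map_zero⟩
  · rintro a ⟨a', ha', rfl⟩ b ⟨b', hb', rfl⟩ c hc
    rw [← q.hom.map_hadd] at hc
    obtain ⟨x, hx, rfl⟩ := hc
    exact ⟨x, haddc _ ha' _ hb' hx, rfl⟩
  · rintro a ⟨a', ha', rfl⟩
    rw [← q.hom.map_neg]
    exact ⟨H.neg a', hneg _ ha', rfl⟩
  · rintro r a ⟨a', ha', rfl⟩
    obtain ⟨s, rfl⟩ := q.surj r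
    rw [← q.hom.map_mul]
    exact ⟨H.mul s a', hmulc _ _ ha', rfl⟩
  · intro hU
    apply hne
    have h1 : K.one ∈ q.hom.toFun '' P := by rw [hU]; trivial
    rw [← q.hom.map_one] at h1
    have hone : H.one ∈ P := by rw [← hpre]; exact h1
    ext r
    simp only [Set.mem_univ, iff_true]
    have := hmulc r _ hone
    rwa [H.mul_comm, H.one_mul] at this
  · intro u v huv
    obtain ⟨a, rfl⟩ := q.surj u
    obtain ⟨b, rfl⟩ := q.surj v
    rw [← q.hom.map_mul] at huv
    have hab : H.mul a b ∈ P := by rw [← hpre]; exact huv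
    rcases hpr _ _ hab with h | h
    · exact Or.inl ⟨a, h, rfl⟩
    · exact Or.inr ⟨b, h, rfl⟩

theorem subset_genIdeal (H : KHR R) (s : Set R) : s ⊆ H.genIdeal s :=
  fun x hx => Set.mem_sInter.2 fun _ hJ => hJ.2 hx

theorem genIdeal_hyperideal (H : KHR R) (s : Set R) :
    H.IsHyperideal (H.genIdeal s) := by
  refine ⟨?_, ?_, ?_, ?_⟩
  · exact Set.mem_sInter.2 fun _ hJ => hJ.1.1
  · intro a ha b hb c hc
    exact Set.mem_sInter.2 fun J hJ =>
      hJ.1.2.1 a (Set.mem_sInter.1 ha J hJ) b (Set.mem_sInter.1 hb J hJ) hc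
  · intro a ha
    exact Set.mem_sInter.2 fun J hJ => hJ.1.2.2.1 a (Set.mem_sInter.1 ha J hJ)
  · intro r a ha
    exact Set.mem_sInter.2 fun J hJ => hJ.1.2.2.2 r a (Set.mem_sInter.1 ha J hJ)

theorem genIdeal_subset_iff (H : KHR R) (s P : Set R) (hP : H.IsHyperideal P) :
    H.genIdeal s ⊆ P ↔ s ⊆ P :=
  ⟨fun h => (H.subset_genIdeal s).trans h,
   fun h => Set.sInter_subset_of_mem ⟨hP, h⟩⟩

end KHR

/-- For a hyperideal `I` of a commutative Krasner hyperring `R` with unit,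
the map `π̄ : Spec(R/I) → Spec(R)` induced by the projection is injective with image
`V(I)`, and `Spec(R/I)` is homeomorphic to `V(I)` with the subspace Zariski topology,
via (the corestriction of) `π̄`. -/
theorem stmt5 {R Q : Type u} (H : KHR R) (K : KHR Q) (I : Set R)
    (hI : H.IsHyperideal I) (q : KHR.IsQuotient H K I) :
    Function.Injective (KHR.specMap H K q.hom) ∧
    Set.range (KHR.specMap H K q.hom) = H.V I ∧
    ∃ e : @Homeomorph K.Spectrum (↥(H.V I)) K.zariski
        (TopologicalSpace.induced Subtype.val H.zariski),
      ∀ P : K.Spectrum, ((e P : ↥(H.V I)) : H.Spectrum) = KHR.specMap H K q.hom P := by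
  classical
  have hrange0 : ∀ P : K.Spectrum, KHR.specMap H K q.hom P ∈ H.V I := by
    intro P i hi
    show q.hom.toFun i ∈ P.1
    rw [KHR.pi_zero_of_mem q hI hi]
    exact P.2.1.1
  have himg : ∀ P : H.Spectrum, I ⊆ P.1 → K.IsPrime (q.hom.toFun '' P.1) :=
    fun P h => KHR.image_prime q hI h P.2
  have hspec : ∀ (P : H.Spectrum) (h : I ⊆ P.1),
      KHR.specMap H K q.hom ⟨q.hom.toFun '' P.1, himg P h⟩ = P :=
    fun P h => Subtype.ext (KHR.preimage_image_eq q hI h P.2.1)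
  have inj : Function.Injective (KHR.specMap H K q.hom) := by
    intro P1 P2 h
    have h' : q.hom.toFun ⁻¹' P1.1 = q.hom.toFun ⁻¹' P2.1 := congrArg Subtype.val h
    apply Subtype.ext
    rw [← Set.image_preimage_eq P1.1 q.surj, ← Set.image_preimage_eq P2.1 q.surj, h']
  have hrange : Set.range (KHR.specMap H K q.hom) = H.V I := by
    ext P
    constructor
    · rintro ⟨P', rfl⟩; exact hrange0 P'
    · intro h; exact ⟨⟨q.hom.toFun '' P.1, himg P h⟩, hspec P h⟩
  refine ⟨inj, hrange, ?_⟩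
  have ct : @Continuous _ _ K.zariski (TopologicalSpace.induced
      (Subtype.val : ↥(H.V I) → H.Spectrum) H.zariski)
      (fun P : K.Spectrum => (⟨KHR.specMap H K q.hom P, hrange0 P⟩ : ↥(H.V I))) := by
    show @Continuous _ _ K.zariski (TopologicalSpace.induced _
      (TopologicalSpace.generateFrom {U | ∃ J : Set R, H.IsHyperideal J ∧ U = (H.V J)ᶜ})) _
    rw [induced_generateFrom_eq]
    rw [continuous_generateFrom_iff]
    rintro s ⟨U, ⟨J, hJ, rfl⟩, rfl⟩
    have heq : (fun P : K.Spectrum => (⟨KHR.specMap H K q.hom P, hrange0 P⟩ : ↥(H.V I)))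
        ⁻¹' (Subtype.val ⁻¹' (H.V J)ᶜ) = (K.V (K.genIdeal (q.hom.toFun '' J)))ᶜ := by
      ext P
      simp only [Set.mem_preimage, Set.mem_compl_iff, KHR.V, Set.mem_setOf_eq]
      rw [K.genIdeal_subset_iff _ _ P.2.1, Set.image_subset_iff]
      rfl
    rw [heq]
    exact TopologicalSpace.GenerateOpen.basic _
      ⟨K.genIdeal (q.hom.toFun '' J), K.genIdeal_hyperideal _, rfl⟩
  have ci : @Continuous _ _ (TopologicalSpace.induced
      (Subtype.val : ↥(H.V I) → H.Spectrum) H.zariski) K.zariski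
      (fun P : ↥(H.V I) => (⟨q.hom.toFun '' P.1.1, himg P.1 P.2⟩ : K.Spectrum)) := by
    letI : TopologicalSpace H.Spectrum := H.zariski
    letI : TopologicalSpace K.Spectrum := K.zariski
    letI : TopologicalSpace ↥(H.V I) :=
      TopologicalSpace.induced (Subtype.val : ↥(H.V I) → H.Spectrum) H.zariski
    show @Continuous _ _ _ (TopologicalSpace.generateFrom
      {U | ∃ J : Set Q, K.IsHyperideal J ∧ U = (K.V J)ᶜ}) _
    refine continuous_generateFrom_iff.2 ?_
    rintro s ⟨J, hJ, rfl⟩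
    have heq : (fun P : ↥(H.V I) => (⟨q.hom.toFun '' P.1.1, himg P.1 P.2⟩ : K.Spectrum))
        ⁻¹' (K.V J)ᶜ = Subtype.val ⁻¹' (H.V (q.hom.toFun ⁻¹' J))ᶜ := by
      ext P
      show ¬ J ⊆ q.hom.toFun '' P.1.1 ↔ ¬ q.hom.toFun ⁻¹' J ⊆ P.1.1
      rw [KHR.image_subset_iff_preimage q hI P.2 P.1.2.1]
    exact heq ▸ (@continuous_induced_dom _ _ (Subtype.val : ↥(H.V I) → H.Spectrum)
      H.zariski).isOpen_preimage _
      (TopologicalSpace.GenerateOpen.basic _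
        ⟨q.hom.toFun ⁻¹' J, KHR.comap_hyperideal' q.hom hJ, rfl⟩)
  letI : TopologicalSpace H.Spectrum := H.zariski
  letI : TopologicalSpace K.Spectrum := K.zariski
  letI : TopologicalSpace ↥(H.V I) :=
    TopologicalSpace.induced (Subtype.val : ↥(H.V I) → H.Spectrum) H.zariski
  refine ⟨{ toFun := fun P => ⟨KHR.specMap H K q.hom P, hrange0 P⟩
            invFun := fun P => ⟨q.hom.toFun '' P.1.1, himg P.1 P.2⟩
            left_inv := ?_
            right_inv := ?_
            continuous_toFun := ct
            continuous_invFun := ci }, fun P => rfl⟩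
  · intro P
    exact Subtype.ext (Set.image_preimage_eq P.1 q.surj)
  · intro P
    exact Subtype.ext (hspec P.1 P.2)
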